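/- Let G be a simple graph with n vertices, m edges, W wedges, T triangles, and transitivity κ = 3T/W > 0. If W ≥ m, then m/√T ≤ √(3n/κ). -/

import Mathlib

lemma sq_eq_two_choose_add (d : ℕ) : d ^ 2 = 2 * d.choose 2 + d := by
  rcases d with _ | e
  · simp
  · rw [Nat.choose_two_right, Nat.succ_sub_one,
      Nat.two_mul_div_two_of_even (by simpa [Nat.mul_comm] using Nat.even_mul_succ_self e)]
    ring

/-- For a simple graph with `n` vertices, `m` edges, `W ≥ m` wedges, `T > 0` triangles
and transitivity `κ = 3T/W`, we have `m / √T ≤ √(3n/κ)`. -/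
theorem edges_div_sqrt_triangles_le
    {V : Type*} [Fintype V] [DecidableEq V] (G : SimpleGraph V) [DecidableRel G.Adj]
    (n m W T : ℕ) (hn : n = Fintype.card V) (hm : m = G.edgeFinset.card)
    (hW : W = ∑ v : V, (G.degree v).choose 2)
    (hT : T = (G.cliqueFinset 3).card)
    (hT0 : 0 < T) (hWm : m ≤ W)
    (κ : ℝ) (hκ : κ = 3 * (T : ℝ) / (W : ℝ)) :
    (m : ℝ) / Real.sqrt T ≤ Real.sqrt (3 * n / κ) := by
  -- W is positive
  have hW0 : 0 < W := by
    rw [hT, Finset.card_pos] at hT0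
    obtain ⟨s, hs⟩ := hT0
    rw [SimpleGraph.mem_cliqueFinset_iff, SimpleGraph.is3Clique_iff] at hs
    obtain ⟨a, b, c, hab, hac, hbc, -⟩ := hs
    have hsub : ({b, c} : Finset V) ⊆ G.neighborFinset a := by
      intro x hx
      simp only [Finset.mem_insert, Finset.mem_singleton] at hx
      rcases hx with rfl | rfl <;> simp [SimpleGraph.mem_neighborFinset, hab, hac]
    have hdeg : 2 ≤ G.degree a := by
      have := Finset.card_le_card hsub
      rwa [Finset.card_insert_of_notMem (by simp [hbc.ne]), Finset.card_singleton] at this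
    have h1 : 1 ≤ (G.degree a).choose 2 := Nat.choose_pos hdeg
    calc 0 < (G.degree a).choose 2 := h1
      _ ≤ W := hW ▸ Finset.single_le_sum (f := fun v => (G.degree v).choose 2) (fun _ _ => Nat.zero_le _) (Finset.mem_univ a)
  -- degree sums
  have hsumdeg : ∑ v : V, G.degree v = 2 * m := by
    rw [hm]; exact G.sum_degrees_eq_twice_card_edges
  have hsumsq : ∑ v : V, (G.degree v) ^ 2 = 2 * W + 2 * m := by
    simp_rw [sq_eq_two_choose_add]
    rw [Finset.sum_add_distrib, ← Finset.mul_sum, hsumdeg, hW]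
  -- Cauchy-Schwarz: (2m)^2 ≤ n * (2W + 2m)
  have hCS := Finset.sum_mul_sq_le_sq_mul_sq Finset.univ (fun _ : V => (1 : ℝ))
      (fun v => (G.degree v : ℝ))
  simp only [one_pow, one_mul, Finset.sum_const, Finset.card_univ, nsmul_eq_mul, mul_one] at hCS
  have h1 : (∑ v : V, (G.degree v : ℝ)) = 2 * m := by
    rw [← Nat.cast_sum, hsumdeg]; push_cast; ring
  have h2 : (∑ v : V, (G.degree v : ℝ) ^ 2) = 2 * W + 2 * m := by
    have : (∑ v : V, (G.degree v : ℝ) ^ 2) = ((∑ v : V, (G.degree v) ^ 2 : ℕ) : ℝ) := by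
      push_cast; ring_nf
    rw [this, hsumsq]; push_cast; ring
  rw [h1, h2, ← hn] at hCS
  -- key: m^2 ≤ n * W in ℝ
  have hkey : (m : ℝ) ^ 2 ≤ (n : ℝ) * W := by
    have hmW : (m : ℝ) ≤ W := by exact_mod_cast hWm
    have hn0 : (0 : ℝ) ≤ n := Nat.cast_nonneg n
    nlinarith [hCS]
  -- real arithmetic
  have hTpos : (0 : ℝ) < T := by exact_mod_cast hT0
  have hWpos : (0 : ℝ) < W := by exact_mod_cast hW0
  have hκeq : 3 * (n : ℝ) / κ = (n : ℝ) * W / T := by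
    rw [hκ]; field_simp
  rw [hκeq, div_eq_mul_inv ((n : ℝ) * W), Real.sqrt_mul (by positivity),
    Real.sqrt_inv, ← div_eq_mul_inv]
  have hnum : (m : ℝ) ≤ Real.sqrt ((n : ℝ) * W) := by
    rw [Real.le_sqrt (by positivity) (by positivity)]
    exact hkey
  exact div_le_div_of_nonneg_right hnum (Real.sqrt_nonneg _)
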